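/- Master identity (Theorem 3.1): Under the stated setting, the derivative at θ of the parametrized iterate and minimizer satisfy deriv xₜ θ - deriv x⋆ θ = ((Polynomial.aeval (H θ) P) - (Polynomial.aeval (H θ) P.derivative) * (H θ)).mulVec (deriv x₀ θ - deriv x⋆ θ) + (Polynomial.aeval (H θ) P.derivative).mulVec ((deriv H θ).mulVec (x₀ θ) + (H θ).mulVec (deriv x₀ θ) + deriv b θ). -/

import Mathlib

open Polynomial Matrix

attribute [local instance] Matrix.normedAddCommGroup Matrix.normedSpace

section Aux

variable {d : ℕ}

noncomputable def auxMulCLM (d : ℕ) :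
    Matrix (Fin d) (Fin d) ℝ →L[ℝ] Matrix (Fin d) (Fin d) ℝ →L[ℝ] Matrix (Fin d) (Fin d) ℝ :=
  LinearMap.toContinuousLinearMap
    { toFun := fun A => LinearMap.toContinuousLinearMap (LinearMap.mul ℝ (Matrix (Fin d) (Fin d) ℝ) A)
      map_add' := by intros; ext; simp [add_mul]
      map_smul' := by intros; ext; simp [smul_mul_assoc] }

lemma HasDerivAt.matmul {f g : ℝ → Matrix (Fin d) (Fin d) ℝ} {f' g' : Matrix (Fin d) (Fin d) ℝ}
    {x : ℝ} (hf : HasDerivAt f f' x) (hg : HasDerivAt g g' x) :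
    HasDerivAt (fun t => f t * g t) (f' * g x + f x * g') x := by
  have ef : ∀ i k, HasDerivAt (fun t => f t i k) (f' i k) x := fun i k =>
    hasDerivAt_pi.1 ((hasDerivAt_pi (φ := f)).1 hf i) k
  have eg : ∀ i k, HasDerivAt (fun t => g t i k) (g' i k) x := fun i k =>
    hasDerivAt_pi.1 ((hasDerivAt_pi (φ := g)).1 hg i) k
  refine (hasDerivAt_pi (φ := fun t => f t * g t)).2 fun i => hasDerivAt_pi.2 fun j => ?_
  simp only [Matrix.mul_apply, Matrix.add_apply, ← Finset.sum_add_distrib]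
  exact HasDerivAt.fun_sum fun k _ => (ef i k).mul (eg k j)

noncomputable def auxMulVecCLM (d : ℕ) :
    Matrix (Fin d) (Fin d) ℝ →L[ℝ] (Fin d → ℝ) →L[ℝ] (Fin d → ℝ) :=
  LinearMap.toContinuousLinearMap
    { toFun := fun A => LinearMap.toContinuousLinearMap (A.mulVecLin)
      map_add' := by intros; ext; simp [Matrix.add_mulVec]
      map_smul' := by intros; ext; simp [Matrix.smul_mulVec] }

lemma HasDerivAt.matmulVec {f : ℝ → Matrix (Fin d) (Fin d) ℝ} {g : ℝ → Fin d → ℝ}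
    {f' : Matrix (Fin d) (Fin d) ℝ} {g' : Fin d → ℝ} {x : ℝ}
    (hf : HasDerivAt f f' x) (hg : HasDerivAt g g' x) :
    HasDerivAt (fun t => (f t).mulVec (g t)) (f'.mulVec (g x) + (f x).mulVec g') x := by
  have ef : ∀ i k, HasDerivAt (fun t => f t i k) (f' i k) x := fun i k =>
    hasDerivAt_pi.1 ((hasDerivAt_pi (φ := f)).1 hf i) k
  refine hasDerivAt_pi.2 fun i => ?_
  simp only [Matrix.mulVec, dotProduct, Pi.add_apply, ← Finset.sum_add_distrib]
  exact HasDerivAt.fun_sum fun k _ => (ef i k).mul (hasDerivAt_pi.1 hg k)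

lemma auxHasDerivAt_aeval {H : ℝ → Matrix (Fin d) (Fin d) ℝ} {A' : Matrix (Fin d) (Fin d) ℝ}
    {θ : ℝ} (hH : HasDerivAt H A' θ) (hcomm : H θ * A' = A' * H θ) (P : Polynomial ℝ) :
    HasDerivAt (fun t => aeval (H t) P) (aeval (H θ) P.derivative * A') θ := by
  induction P using Polynomial.induction_on with
  | C a => simp only [derivative_C, map_zero, zero_mul, aeval_C]; exact hasDerivAt_const θ (algebraMap ℝ _ a)
  | add p q hp hq => simp only [map_add, derivative_add, add_mul]; exact hp.add hq
  | monomial n a hp =>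
      have hsplit : (C a : ℝ[X]) * X ^ (n + 1) = (C a * X ^ n) * X := by
        rw [pow_succ, mul_assoc]
      have key : ∀ t, aeval (H t) (C a * X ^ (n + 1)) = aeval (H t) (C a * X ^ n) * H t := by
        intro t; rw [hsplit, _root_.map_mul, aeval_X]
      rw [show (fun t => aeval (H t) (C a * X ^ (n + 1)))
          = fun t => aeval (H t) (C a * X ^ n) * H t from funext key]
      have h2 := hp.matmul hH
      have hder : derivative (C a * X ^ (n + 1)) = derivative (C a * X ^ n) * X + C a * X ^ n := by
        rw [hsplit, derivative_mul, derivative_X, mul_one]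
      rw [hder]
      have hrw2 : aeval (H θ) (derivative (C a * X ^ n) * X + C a * X ^ n) * A'
          = aeval (H θ) (derivative (C a * X ^ n)) * A' * H θ
            + aeval (H θ) (C a * X ^ n) * A' := by
        rw [map_add, _root_.map_mul, aeval_X, add_mul, mul_assoc, hcomm, ← mul_assoc]
      rw [hrw2]
      exact h2

lemma auxDiffAt_entry {H : ℝ → Matrix (Fin d) (Fin d) ℝ} {θ : ℝ}
    (hH : DifferentiableAt ℝ H θ) (i j : Fin d) :
    DifferentiableAt ℝ (fun t => H t i j) θ := by
  have := (differentiableAt_pi (Φ := H)).1 hH i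
  rw [differentiableAt_pi] at this
  exact this j

lemma auxDiffAt_det {H : ℝ → Matrix (Fin d) (Fin d) ℝ} {θ : ℝ}
    (hH : DifferentiableAt ℝ H θ) :
    DifferentiableAt ℝ (fun t => (H t).det) θ := by
  simp only [Matrix.det_apply]
  apply DifferentiableAt.fun_sum
  intro σ _
  simp only [Units.smul_def, zsmul_eq_mul]
  exact DifferentiableAt.const_mul
    (DifferentiableAt.fun_finsetProd (fun i _ => auxDiffAt_entry hH (σ i) i)) _

lemma auxDiffAt_adjugate {H : ℝ → Matrix (Fin d) (Fin d) ℝ} {θ : ℝ}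
    (hH : DifferentiableAt ℝ H θ) :
    DifferentiableAt ℝ (fun t => (H t).adjugate) θ := by
  refine (differentiableAt_pi (Φ := fun t => (H t).adjugate)).2 fun i => ?_
  rw [differentiableAt_pi]
  intro j
  simp only [Matrix.adjugate_apply]
  apply auxDiffAt_det
  refine (differentiableAt_pi (Φ := fun t => _)).2 fun k => ?_
  rw [differentiableAt_pi]
  intro l
  by_cases hk : k = j
  · subst hk
    simp only [Matrix.updateRow_self]
    exact differentiableAt_const _
  · simp only [Matrix.updateRow_ne hk]
    exact auxDiffAt_entry hH k l

lemma auxDiffAt_inv {H : ℝ → Matrix (Fin d) (Fin d) ℝ} {θ : ℝ}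
    (hH : DifferentiableAt ℝ H θ) (hdet : (H θ).det ≠ 0) :
    DifferentiableAt ℝ (fun t => (H t)⁻¹) θ := by
  have : (fun t => (H t)⁻¹) = fun t => ((H t).det)⁻¹ • (H t).adjugate := by
    funext t
    rw [Matrix.inv_def, Ring.inverse_eq_inv']
  rw [this]
  exact ((auxDiffAt_det hH).inv hdet).smul (auxDiffAt_adjugate hH)

end Aux

/-- Master identity (Theorem 3.1). -/
theorem master_identity {d : ℕ} (hd : 1 ≤ d) (θ : ℝ)
    (H : ℝ → Matrix (Fin d) (Fin d) ℝ) (b x₀ : ℝ → (Fin d → ℝ))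
    (hH : DifferentiableAt ℝ H θ) (hb : DifferentiableAt ℝ b θ)
    (hx₀ : DifferentiableAt ℝ x₀ θ)
    (hsym : (H θ).IsSymm) (hpd : (H θ).PosDef)
    (hcomm : H θ * deriv H θ = deriv H θ * H θ)
    (P : Polynomial ℝ) (hP0 : P.eval 0 = 1)
    (xstar : ℝ → (Fin d → ℝ))
    (hxstar : ∀ θ' : ℝ, xstar θ' = -((H θ')⁻¹.mulVec (b θ')))
    (xt : ℝ → (Fin d → ℝ))
    (hxt : ∀ θ' : ℝ, xt θ' =
      xstar θ' + ((Polynomial.aeval (H θ')) P).mulVec (x₀ θ' - xstar θ')) :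
    deriv xt θ - deriv xstar θ =
      ((Polynomial.aeval (H θ)) P - (Polynomial.aeval (H θ)) P.derivative * H θ).mulVec
          (deriv x₀ θ - deriv xstar θ)
        + ((Polynomial.aeval (H θ)) P.derivative).mulVec
            ((deriv H θ).mulVec (x₀ θ) + (H θ).mulVec (deriv x₀ θ) + deriv b θ) := by
  have hHd : HasDerivAt H (deriv H θ) θ := hH.hasDerivAt
  have hbd : HasDerivAt b (deriv b θ) θ := hb.hasDerivAt
  have hx₀d : HasDerivAt x₀ (deriv x₀ θ) θ := hx₀.hasDerivAt
  have hdet : (H θ).det ≠ 0 := ne_of_gt hpd.det_pos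
  have hinv : DifferentiableAt ℝ (fun t => (H t)⁻¹) θ := auxDiffAt_inv hH hdet
  have hxseq : xstar = fun t => -((H t)⁻¹.mulVec (b t)) := funext hxstar
  have hxsdiff : DifferentiableAt ℝ xstar θ := by
    rw [hxseq]
    exact (hinv.hasDerivAt.matmulVec hbd).differentiableAt.neg
  have hxsd : HasDerivAt xstar (deriv xstar θ) θ := hxsdiff.hasDerivAt
  -- eventual identity H t ⬝ xstar t = -(b t)
  have hev : ∀ᶠ t in nhds θ, (H t).det ≠ 0 :=
    (auxDiffAt_det hH).continuousAt.eventually_ne hdet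
  have hevF : (fun t => (H t).mulVec (xstar t)) =ᶠ[nhds θ] (fun t => -(b t)) := by
    filter_upwards [hev] with t ht
    rw [hxstar t, Matrix.mulVec_neg, Matrix.mulVec_mulVec,
      Matrix.mul_nonsing_inv _ (isUnit_iff_ne_zero.mpr ht), Matrix.one_mulVec]
  have hF : HasDerivAt (fun t => (H t).mulVec (xstar t))
      ((deriv H θ).mulVec (xstar θ) + (H θ).mulVec (deriv xstar θ)) θ :=
    hHd.matmulVec hxsd
  have hG : HasDerivAt (fun t => -(b t))
      ((deriv H θ).mulVec (xstar θ) + (H θ).mulVec (deriv xstar θ)) θ :=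
    hF.congr_of_eventuallyEq hevF.symm
  have key : (deriv H θ).mulVec (xstar θ) + (H θ).mulVec (deriv xstar θ) = -(deriv b θ) :=
    hG.unique hbd.neg
  have key' : (H θ).mulVec (deriv xstar θ)
      = -(deriv b θ) - (deriv H θ).mulVec (xstar θ) := by
    rw [← key]; abel
  -- derivative of xt
  have hPa : HasDerivAt (fun t => aeval (H t) P)
      (aeval (H θ) P.derivative * deriv H θ) θ := auxHasDerivAt_aeval hHd hcomm P
  have hxtd : HasDerivAt xt
      (deriv xstar θ + ((aeval (H θ) P.derivative * deriv H θ).mulVec (x₀ θ - xstar θ)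
        + (aeval (H θ) P).mulVec (deriv x₀ θ - deriv xstar θ))) θ := by
    rw [show xt = fun t => xstar t + (aeval (H t) P).mulVec (x₀ t - xstar t) from funext hxt]
    exact hxsd.add (hPa.matmulVec (hx₀d.sub hxsd))
  rw [hxtd.deriv]
  simp only [Matrix.sub_mulVec, ← Matrix.mulVec_mulVec, Matrix.mulVec_sub, Matrix.mulVec_add,
    key', Matrix.mulVec_neg]
  abel
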